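/- Let P be a signed poset on [n]. The set of integer points of the signed chain polytope C_P is exactly the set of antichains of P, where a ∈ {-1,0,1}^n is an antichain if for every α ∈ P of the form ±e_i ± e_j or ±e_i ∓ e_j (i ≠ j), either ⟨α, a⟩ ≠ 0 or a_i = a_j = 0. -/

import Mathlib

open Finset Pointwise

noncomputable section
attribute [local instance] Classical.propDecidable

/-- The `i`-th standard unit vector in `ℝ^n`. -/
def ee (n : ℕ) (i : Fin n) : Fin n → ℝ := fun j => if j = i then 1 else 0

/-- Standard inner product on `ℝ^n`. -/
def dot {n : ℕ} (a x : Fin n → ℝ) : ℝ := ∑ i, a i * x i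

/-- The type-B root system `B_n`. -/
def Bn (n : ℕ) : Set (Fin n → ℝ) :=
  {α | (∃ i : Fin n, α = ee n i ∨ α = -ee n i) ∨
       (∃ i j : Fin n, i < j ∧ (α = ee n i + ee n j ∨ α = -ee n i - ee n j ∨
          α = ee n i - ee n j ∨ α = -ee n i + ee n j))}

/-- The set of positive linear combinations of elements of `S`. -/
def PLC {n : ℕ} (S : Set (Fin n → ℝ)) : Set (Fin n → ℝ) :=
  {β | ∃ (m : ℕ) (c : Fin m → ℝ) (v : Fin m → (Fin n → ℝ)),
     (∀ k, 0 < c k) ∧ (∀ k, v k ∈ S) ∧ β = ∑ k, c k • v k}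

/-- A signed poset on `[n]`: a subset of `B_n` with antisymmetry, closed under
positive linear combinations within `B_n`. -/
def IsSignedPoset {n : ℕ} (P : Set (Fin n → ℝ)) : Prop :=
  P ⊆ Bn n ∧ (∀ α ∈ P, -α ∉ P) ∧ (∀ β ∈ Bn n, β ∈ PLC P → β ∈ P)

/-- The signed order cone `K_P`. -/
def orderCone {n : ℕ} (P : Set (Fin n → ℝ)) : Set (Fin n → ℝ) :=
  {x | ∀ α ∈ P, 0 ≤ dot α x}

/-- The signed order polytope `O_P = K_P ∩ [-1,1]^n`. -/
def orderPolytope {n : ℕ} (P : Set (Fin n → ℝ)) : Set (Fin n → ℝ) :=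
  {x | (∀ α ∈ P, 0 ≤ dot α x) ∧ ∀ i, -1 ≤ x i ∧ x i ≤ 1}

/-- `(c, s)` is a chain of the signed poset `P`, consisting of `m + 1` elements
`c 0, ..., c m` of `[n]` and signs `s 0, ..., s (m-1)`. -/
def IsSChain {n : ℕ} (P : Set (Fin n → ℝ)) (m : ℕ) (c : Fin (m + 1) → Fin n)
    (s : Fin m → ℝ) : Prop :=
  (∀ i, s i = 1 ∨ s i = -1) ∧
  ∃ α : Fin m → (Fin n → ℝ),
    (∀ i : Fin m, α i ∈ P ∧
      ((s i = 1 ∧ (α i = ee n (c i.castSucc) - ee n (c i.succ) ∨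
                    α i = -(ee n (c i.castSucc) - ee n (c i.succ)))) ∨
       (s i = -1 ∧ (α i = ee n (c i.castSucc) + ee n (c i.succ) ∨
                    α i = -(ee n (c i.castSucc) + ee n (c i.succ)))))) ∧
    (∀ i : Fin m, ∀ h : (i : ℕ) + 1 < m, α i + α ⟨(i : ℕ) + 1, h⟩ ∈ P)

/-- The linear functional `x_{c_1} + s_1 x_{c_2} + s_1 s_2 x_{c_3} + ⋯` of a chain. -/
def chainFun {n m : ℕ} (c : Fin (m + 1) → Fin n) (s : Fin m → ℝ) (x : Fin n → ℝ) : ℝ :=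
  ∑ k : Fin (m + 1),
    (∏ l ∈ Finset.univ.filter (fun l : Fin m => (l : ℕ) < (k : ℕ)), s l) * x (c k)

/-- The signed chain polytope `C_P`. -/
def chainPolytope {n : ℕ} (P : Set (Fin n → ℝ)) : Set (Fin n → ℝ) :=
  {x | ∀ (m : ℕ) (c : Fin (m + 1) → Fin n) (s : Fin m → ℝ), IsSChain P m c s →
        -1 ≤ chainFun c s x ∧ chainFun c s x ≤ 1}

/-- `a ∈ {-1,0,1}^n` is an antichain of `P`: for every `α ∈ P` of the form
`±e_i ± e_j` (`i ≠ j`), either `⟨α, a⟩ ≠ 0` or `a_i = a_j = 0`. -/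
def IsSAntichain {n : ℕ} (P : Set (Fin n → ℝ)) (a : Fin n → ℤ) : Prop :=
  (∀ i, a i = -1 ∨ a i = 0 ∨ a i = 1) ∧
  ∀ i j : Fin n, i ≠ j → ∀ α ∈ P,
    (α = ee n i + ee n j ∨ α = -ee n i - ee n j ∨
     α = ee n i - ee n j ∨ α = -ee n i + ee n j) →
    (dot α (fun l => (a l : ℝ)) ≠ 0 ∨ (a i = 0 ∧ a j = 0))

section Helpers
variable {n : ℕ}

lemma ee_apply_self (i : Fin n) : ee n i i = 1 := by simp [ee]

lemma ee_apply_ne {i j : Fin n} (h : j ≠ i) : ee n i j = 0 := by simp [ee, h]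

lemma dot_ee (i : Fin n) (x : Fin n → ℝ) : dot (ee n i) x = x i := by
  simp [dot, ee, ite_mul]

lemma Bn_vals {α : Fin n → ℝ} (h : α ∈ Bn n) : ∀ l, α l = -1 ∨ α l = 0 ∨ α l = 1 := by
  intro l
  rcases h with ⟨i, h | h⟩ | ⟨i, j, hij, h | h | h | h⟩ <;> subst h <;>
    simp [ee] <;> split_ifs <;> norm_num <;> omega

lemma Bn_ne_zero {α : Fin n → ℝ} (h : α ∈ Bn n) : α ≠ 0 := by
  rcases h with ⟨i, h | h⟩ | ⟨i, j, hij, h | h | h | h⟩ <;> subst h <;>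
    intro hz <;> [skip; skip; skip; skip; skip; skip] <;>
    first
    | (have := congrFun hz i; simp [ee] at this; try split_ifs at this <;> simp_all <;> omega)

lemma neg_mem_Bn {α : Fin n → ℝ} (h : α ∈ Bn n) : -α ∈ Bn n := by
  rcases h with ⟨i, h | h⟩ | ⟨i, j, hij, h | h | h | h⟩ <;> subst h
  · exact Or.inl ⟨i, Or.inr rfl⟩
  · exact Or.inl ⟨i, Or.inl (by simp)⟩
  · exact Or.inr ⟨i, j, hij, Or.inr (Or.inl (by abel))⟩
  · exact Or.inr ⟨i, j, hij, Or.inl (by abel)⟩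
  · exact Or.inr ⟨i, j, hij, Or.inr (Or.inr (Or.inr (by abel)))⟩
  · exact Or.inr ⟨i, j, hij, Or.inr (Or.inr (Or.inl (by abel)))⟩
end Helpers
section Helpers2
variable {n : ℕ}

lemma pm_mem_Bn {p q : Fin n} (hpq : p ≠ q) {σ τ : ℝ}
    (hσ : σ = 1 ∨ σ = -1) (hτ : τ = 1 ∨ τ = -1) :
    (fun l => σ * ee n p l + τ * ee n q l) ∈ Bn n := by
  have e : ∀ X : Fin n → ℝ, (fun l => σ * ee n p l + τ * ee n q l) = X ↔
      ∀ l, σ * ee n p l + τ * ee n q l = X l := by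
    intro X; constructor
    · intro hh l; rw [← hh]
    · intro hh; funext l; exact hh l
  rcases lt_or_gt_of_ne hpq with h | h
  · right; refine ⟨p, q, h, ?_⟩
    rcases hσ with rfl | rfl <;> rcases hτ with rfl | rfl
    · exact Or.inl ((e _).2 fun l => by simp only [Pi.add_apply]; ring)
    · exact Or.inr (Or.inr (Or.inl ((e _).2 fun l => by simp only [Pi.sub_apply]; ring)))
    · exact Or.inr (Or.inr (Or.inr ((e _).2 fun l => by
        simp only [Pi.add_apply, Pi.neg_apply]; ring)))
    · exact Or.inr (Or.inl ((e _).2 fun l => by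
        simp only [Pi.sub_apply, Pi.neg_apply]; ring))
  · right; refine ⟨q, p, h, ?_⟩
    rcases hσ with rfl | rfl <;> rcases hτ with rfl | rfl
    · exact Or.inl ((e _).2 fun l => by simp only [Pi.add_apply]; ring)
    · exact Or.inr (Or.inr (Or.inr ((e _).2 fun l => by
        simp only [Pi.add_apply, Pi.neg_apply]; ring)))
    · exact Or.inr (Or.inr (Or.inl ((e _).2 fun l => by simp only [Pi.sub_apply]; ring)))
    · exact Or.inr (Or.inl ((e _).2 fun l => by
        simp only [Pi.sub_apply, Pi.neg_apply]; ring))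

lemma sum_mem_PLC {S : Set (Fin n → ℝ)} {ι : Type*} (F : Finset ι)
    (f : ι → Fin n → ℝ) (h : ∀ i ∈ F, f i ∈ S) : (∑ i ∈ F, f i) ∈ PLC S := by
  refine ⟨F.card, fun _ => 1, fun k => f (F.equivFin.symm k), fun _ => one_pos,
    fun k => h _ (F.equivFin.symm k).2, ?_⟩
  simp only [one_smul]
  rw [Equiv.sum_comp F.equivFin.symm (fun x : F => f (x : ι)), Finset.sum_coe_sort F f]

lemma sum_bound {N : ℕ} (b : Fin N → ℝ) (hv : ∀ k, b k = -1 ∨ b k = 0 ∨ b k = 1)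
    (hp : ∀ k j, k ≠ j → b k = b j → b k = 0) :
    -1 ≤ ∑ k, b k ∧ ∑ k, b k ≤ 1 := by
  classical
  have key : ∀ v : ℝ, v ≠ 0 → (Finset.univ.filter (fun k => b k = v)).card ≤ 1 := by
    intro v hv0
    refine Finset.card_le_one.2 ?_
    intro x hx y hy
    by_contra hxy
    have hbx := (Finset.mem_filter.1 hx).2
    have hby := (Finset.mem_filter.1 hy).2
    exact hv0 (hbx ▸ hp x y hxy (hbx.trans hby.symm))
  set S1 := Finset.univ.filter (fun k => b k = 1) with hS1
  set Sm := Finset.univ.filter (fun k => b k = -1) with hSm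
  have hd : Disjoint S1 Sm := by
    rw [Finset.disjoint_left]
    intro x hx hx'
    have h1 := (Finset.mem_filter.1 hx).2
    have h2 := (Finset.mem_filter.1 hx').2
    rw [h1] at h2; norm_num at h2
  have hU : ∑ k ∈ S1 ∪ Sm, b k = ∑ k, b k := by
    refine Finset.sum_subset (Finset.subset_univ _) ?_
    intro x _ hx
    rw [Finset.mem_union, hS1, hSm, Finset.mem_filter, Finset.mem_filter] at hx
    push_neg at hx
    rcases hv x with h | h | h
    · exact absurd h (hx.2 (Finset.mem_univ x))
    · exact h
    · exact absurd h (hx.1 (Finset.mem_univ x))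
  have h1 : ∑ k ∈ S1, b k = (S1.card : ℝ) := by
    rw [Finset.sum_congr rfl (fun x hx => (Finset.mem_filter.1 hx).2), Finset.sum_const,
      nsmul_eq_mul, mul_one]
  have hm : ∑ k ∈ Sm, b k = -(Sm.card : ℝ) := by
    rw [Finset.sum_congr rfl (fun x hx => (Finset.mem_filter.1 hx).2), Finset.sum_const,
      nsmul_eq_mul]
    ring
  have hc1 : S1.card ≤ 1 := key 1 one_ne_zero
  have hcm : Sm.card ≤ 1 := key (-1) (by norm_num)
  have hc1' : (S1.card : ℝ) ≤ 1 := by exact_mod_cast hc1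
  have hcm' : (Sm.card : ℝ) ≤ 1 := by exact_mod_cast hcm
  have hc10 : (0:ℝ) ≤ S1.card := Nat.cast_nonneg _
  have hcm0 : (0:ℝ) ≤ Sm.card := Nat.cast_nonneg _
  rw [← hU, Finset.sum_union hd, h1, hm]
  constructor <;> linarith
end Helpers2
section Helpers3
variable {n : ℕ}

lemma dot_pm (p q : Fin n) (σ τ : ℝ) (x : Fin n → ℝ) :
    dot (fun l => σ * ee n p l + τ * ee n q l) x = σ * x p + τ * x q := by
  unfold dot ee
  simp only [add_mul, Finset.sum_add_distrib, ite_mul, mul_ite, mul_one, mul_zero, zero_mul,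
    one_mul, mul_assoc]
  rw [Finset.sum_ite_eq' Finset.univ p (fun l => σ * x l),
    Finset.sum_ite_eq' Finset.univ q (fun l => τ * x l)]
  simp

lemma pm_form (p q : Fin n) {σ τ : ℝ} (hσ : σ = 1 ∨ σ = -1) (hτ : τ = 1 ∨ τ = -1) :
    (fun l => σ * ee n p l + τ * ee n q l) = ee n p + ee n q ∨
    (fun l => σ * ee n p l + τ * ee n q l) = -ee n p - ee n q ∨
    (fun l => σ * ee n p l + τ * ee n q l) = ee n p - ee n q ∨
    (fun l => σ * ee n p l + τ * ee n q l) = -ee n p + ee n q := by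
  have e : ∀ X : Fin n → ℝ, (∀ l, σ * ee n p l + τ * ee n q l = X l) →
      (fun l => σ * ee n p l + τ * ee n q l) = X := fun X hh => funext hh
  rcases hσ with rfl | rfl <;> rcases hτ with rfl | rfl
  · refine Or.inl (e _ fun l => ?_); simp only [Pi.add_apply]; ring
  · refine Or.inr (Or.inr (Or.inl (e _ fun l => ?_))); simp only [Pi.sub_apply]; ring
  · refine Or.inr (Or.inr (Or.inr (e _ fun l => ?_)))
    simp only [Pi.add_apply, Pi.neg_apply]; ring
  · refine Or.inr (Or.inl (e _ fun l => ?_)); simp only [Pi.sub_apply, Pi.neg_apply]; ring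
end Helpers3
section CF
variable {n : ℕ}
lemma chainFun_zero (c : Fin 1 → Fin n) (s : Fin 0 → ℝ) (x : Fin n → ℝ) :
    chainFun c s x = x (c 0) := by
  simp [chainFun]

lemma chainFun_one (c : Fin 2 → Fin n) (s : Fin 1 → ℝ) (x : Fin n → ℝ) :
    chainFun c s x = x (c 0) + s 0 * x (c 1) := by
  rw [chainFun, Fin.sum_univ_two]
  congr 1
  · norm_num
  · congr 1
    rw [show Finset.univ.filter (fun l : Fin 1 => (l : ℕ) < ((1 : Fin 2) : ℕ)) =
      {(0 : Fin 1)} by decide]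
    simp
end CF
section Main
variable {n : ℕ}

set_option maxHeartbeats 2000000 in
lemma antichain_chain_bound {P : Set (Fin n → ℝ)} (hP : IsSignedPoset P)
    {a : Fin n → ℤ} (ha : IsSAntichain P a)
    (m : ℕ) (c : Fin (m + 1) → Fin n) (s : Fin m → ℝ) (hch : IsSChain P m c s) :
    -1 ≤ chainFun c s (fun i => (a i : ℝ)) ∧ chainFun c s (fun i => (a i : ℝ)) ≤ 1 := by
  obtain ⟨hs, α, hα, hsum2⟩ := hch
  set T : ℕ → ℝ := fun j => ∏ l ∈ Finset.univ.filter (fun l : Fin m => (l : ℕ) < j), s l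
    with hT
  have hT1 : ∀ j, T j = 1 ∨ T j = -1 := by
    intro j
    refine Finset.prod_induction s (fun r => r = 1 ∨ r = -1) ?_ (Or.inl rfl) ?_
    · rintro x y (rfl | rfl) (rfl | rfl) <;> norm_num
    · exact fun i _ => hs i
  have hT0 : T 0 = 1 := by
    rw [hT]
    simp
  have hTstep : ∀ j, ∀ h : j < m, T (j + 1) = T j * s ⟨j, h⟩ := by
    intro j h
    have hins : Finset.univ.filter (fun l : Fin m => (l : ℕ) < j + 1) =
        insert ⟨j, h⟩ (Finset.univ.filter (fun l : Fin m => (l : ℕ) < j)) := by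
      ext x
      simp only [Finset.mem_filter, Finset.mem_univ, true_and, Finset.mem_insert, Fin.ext_iff]
      omega
    rw [hT]
    simp only [hins]
    rw [Finset.prod_insert (by simp)]
    ring
  -- each chain element has distinct endpoints
  have hcne : ∀ i : Fin m, c i.castSucc ≠ c i.succ := by
    intro i heq
    obtain ⟨hiP, hcase⟩ := hα i
    have hBn := hP.1 hiP
    rcases hcase with ⟨_, hf | hf⟩ | ⟨_, hf | hf⟩
    · exact Bn_ne_zero hBn (by rw [hf, heq]; simp)
    · exact Bn_ne_zero hBn (by rw [hf, heq]; simp)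
    · have := Bn_vals hBn (c i.castSucc)
      rw [hf] at this
      simp only [Pi.add_apply, ee_apply_self, heq] at this
      norm_num at this
    · have := Bn_vals hBn (c i.castSucc)
      rw [hf] at this
      simp only [Pi.neg_apply, Pi.add_apply, ee_apply_self, heq] at this
      norm_num at this
  -- sign of α i
  set e0 : Fin m → ℝ := fun i => α i (c i.castSucc) with he0
  have heps : ∀ i : Fin m, (e0 i = 1 ∨ e0 i = -1) ∧
      α i = fun l => e0 i * ee n (c i.castSucc) l + (-(e0 i) * s i) * ee n (c i.succ) l := by
    intro i
    obtain ⟨hiP, hcase⟩ := hα i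
    have hne01 : ee n (c i.succ) (c i.castSucc) = 0 := ee_apply_ne (hcne i)
    rcases hcase with ⟨hsi, hf | hf⟩ | ⟨hsi, hf | hf⟩ <;>
      [(have hv : e0 i = 1 := by show α i (c i.castSucc) = _; rw [hf]; simp [Pi.sub_apply, ee_apply_self, hne01]);
       (have hv : e0 i = -1 := by show α i (c i.castSucc) = _; rw [hf]; simp [Pi.sub_apply, ee_apply_self, hne01]);
       (have hv : e0 i = 1 := by show α i (c i.castSucc) = _; rw [hf]; simp [Pi.add_apply, ee_apply_self, hne01]);
       (have hv : e0 i = -1 := by show α i (c i.castSucc) = _; rw [hf]; simp [Pi.add_apply, ee_apply_self, hne01])] <;>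
      refine ⟨by rw [hv]; norm_num, ?_⟩ <;> rw [hf, hv, hsi] <;> funext l <;>
      simp only [Pi.sub_apply, Pi.add_apply, Pi.neg_apply] <;> ring
  -- consistency
  have hcons : ∀ i : Fin m, ∀ h : (i : ℕ) + 1 < m,
      e0 ⟨(i : ℕ) + 1, h⟩ = e0 i * s i := by
    intro i h
    have hβ : α i + α ⟨(i : ℕ) + 1, h⟩ ∈ P := hsum2 i h
    have hBn := hP.1 hβ
    have hcs : (⟨(i : ℕ) + 1, h⟩ : Fin m).castSucc = i.succ := by
      apply Fin.ext; simp
    have hv := Bn_vals hBn (c i.succ)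
    have hval1 : α i (c i.succ) = -(e0 i) * s i := by
      rw [(heps i).2]
      simp only [ee_apply_ne (hcne i).symm, ee_apply_self]
      ring
    have hval2 : α ⟨(i : ℕ) + 1, h⟩ (c i.succ) = e0 ⟨(i : ℕ) + 1, h⟩ := by
      have hne2 : c i.succ ≠ c (⟨(i : ℕ) + 1, h⟩ : Fin m).succ := by
        rw [← hcs]; exact hcne ⟨(i : ℕ) + 1, h⟩
      rw [(heps ⟨(i : ℕ) + 1, h⟩).2]
      simp only [hcs, ee_apply_self, ee_apply_ne hne2]
      ring
    rw [Pi.add_apply, hval1, hval2] at hv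
    rcases (heps i).1 with h1 | h1 <;> rcases hs i with h2 | h2 <;>
      rcases (heps ⟨(i : ℕ) + 1, h⟩).1 with h3 | h3 <;>
      rw [h1, h2, h3] at hv ⊢ <;> norm_num at hv <;> norm_num
  -- epsilon along the chain
  have heT : ∀ (hm : 0 < m) (j : ℕ) (hj : j < m), e0 ⟨j, hj⟩ = e0 ⟨0, hm⟩ * T j := by
    intro hm j
    induction j with
    | zero => intro hj; rw [hT0, mul_one]
    | succ j ih =>
      intro hj
      have hj' : j < m := by omega
      rw [hTstep j hj', ← mul_assoc, ← ih hj']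
      exact hcons ⟨j, hj'⟩ hj
  -- telescoping partial sums
  have htel : ∀ (hm : 0 < m) (j : ℕ) (hj : j ≤ m),
      (∑ i ∈ Finset.univ.filter (fun i : Fin m => (i : ℕ) < j), α i) =
      fun l => e0 ⟨0, hm⟩ * ee n (c ⟨0, by omega⟩) l -
        e0 ⟨0, hm⟩ * T j * ee n (c ⟨j, by omega⟩) l := by
    intro hm j
    induction j with
    | zero =>
      intro hj
      have hemp : Finset.univ.filter (fun i : Fin m => (i : ℕ) < 0) = ∅ := by
        ext x; simp
      rw [hemp, Finset.sum_empty]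
      funext l
      rw [hT0, Pi.zero_apply]
      ring
    | succ j ih =>
      intro hj
      have hj' : j < m := by omega
      have hins : Finset.univ.filter (fun i : Fin m => (i : ℕ) < j + 1) =
          insert ⟨j, hj'⟩ (Finset.univ.filter (fun i : Fin m => (i : ℕ) < j)) := by
        ext x
        simp only [Finset.mem_filter, Finset.mem_univ, true_and, Finset.mem_insert, Fin.ext_iff]
        omega
      have hc1 : (⟨j, hj'⟩ : Fin m).castSucc = (⟨j, by omega⟩ : Fin (m + 1)) := by
        apply Fin.ext; simp
      have hc2 : (⟨j, hj'⟩ : Fin m).succ = (⟨j + 1, by omega⟩ : Fin (m + 1)) := by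
        apply Fin.ext; simp
      rw [hins, Finset.sum_insert (by simp), ih (by omega), (heps ⟨j, hj'⟩).2,
        heT hm j hj', hc1, hc2, hTstep j hj']
      funext l
      simp only [Pi.add_apply, Pi.sub_apply]
      ring
  -- decomposition of interval sums
  have hdec : ∀ (k j : ℕ), k ≤ j → j ≤ m →
      (∑ i ∈ Finset.univ.filter (fun i : Fin m => (i : ℕ) < j), α i) =
      (∑ i ∈ Finset.univ.filter (fun i : Fin m => (i : ℕ) < k), α i) +
      (∑ i ∈ Finset.univ.filter (fun i : Fin m => k ≤ (i : ℕ) ∧ (i : ℕ) < j), α i) := by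
    intro k j hkj hjm
    have hun : Finset.univ.filter (fun i : Fin m => (i : ℕ) < j) =
        (Finset.univ.filter (fun i : Fin m => (i : ℕ) < k)) ∪
        (Finset.univ.filter (fun i : Fin m => k ≤ (i : ℕ) ∧ (i : ℕ) < j)) := by
      ext x
      simp only [Finset.mem_filter, Finset.mem_univ, true_and, Finset.mem_union]
      omega
    have hdis : Disjoint (Finset.univ.filter (fun i : Fin m => (i : ℕ) < k))
        (Finset.univ.filter (fun i : Fin m => k ≤ (i : ℕ) ∧ (i : ℕ) < j)) := by
      rw [Finset.disjoint_left]
      intro x hx hx'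
      simp only [Finset.mem_filter, Finset.mem_univ, true_and] at hx hx'
      omega
    rw [hun, Finset.sum_union hdis]
  -- the key pairwise claim
  have key : ∀ (k j : ℕ) (hk : k < j) (hj : j ≤ m),
      T k * (a (c ⟨k, by omega⟩) : ℝ) = T j * (a (c ⟨j, by omega⟩) : ℝ) →
      T k * (a (c ⟨k, by omega⟩) : ℝ) = 0 := by
    intro k j hk hj heq
    have hm : 0 < m := by omega
    have hkm : k ≤ m := by omega
    have hεv := (heps ⟨0, hm⟩).1
    have hFsum : (∑ i ∈ Finset.univ.filter (fun i : Fin m => k ≤ (i : ℕ) ∧ (i : ℕ) < j), α i) =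
        fun l => (e0 ⟨0, hm⟩ * T k) * ee n (c ⟨k, by omega⟩) l +
          (-(e0 ⟨0, hm⟩ * T j)) * ee n (c ⟨j, by omega⟩) l := by
      have h1 := hdec k j (le_of_lt hk) hj
      rw [htel hm j hj, htel hm k hkm] at h1
      funext l
      have h2 := congrFun h1 l
      simp only [Pi.add_apply, Pi.sub_apply] at h2 ⊢
      linarith [h2]
    by_cases hcc : c (⟨k, by omega⟩ : Fin (m + 1)) = c (⟨j, by omega⟩ : Fin (m + 1))
    · -- same endpoints
      have hcontra : T k = T j → False := by
        intro hTT
        have h0 : (∑ i ∈ Finset.univ.filter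
            (fun i : Fin m => k ≤ (i : ℕ) ∧ (i : ℕ) < j), α i) = 0 := by
          rw [hFsum]
          funext l
          rw [Pi.zero_apply, hcc, hTT]
          ring
        set kf : Fin m := ⟨k, by omega⟩ with hkf
        have hkmem : kf ∈ Finset.univ.filter
            (fun i : Fin m => k ≤ (i : ℕ) ∧ (i : ℕ) < j) := by
          simp only [Finset.mem_filter, Finset.mem_univ, true_and, hkf]
          omega
        have h3 := Finset.add_sum_erase _ α hkmem
        rw [h0] at h3
        have h4 : -(α kf) = ∑ i ∈ (Finset.univ.filter
            (fun i : Fin m => k ≤ (i : ℕ) ∧ (i : ℕ) < j)).erase kf, α i := by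
          have := eq_neg_of_add_eq_zero_right h3
          rw [this]
        have h5 : -(α kf) ∈ P := by
          apply hP.2.2 _ (neg_mem_Bn (hP.1 (hα kf).1))
          rw [h4]
          exact sum_mem_PLC _ _ (fun i _ => (hα i).1)
        exact hP.2.1 (α kf) (hα kf).1 h5
      rcases hT1 k with h1 | h1 <;> rcases hT1 j with h2 | h2
      · exact absurd (h1.trans h2.symm) (fun hh => hcontra hh)
      · rw [h1, hcc] at heq ⊢; rw [h2] at heq; linarith
      · rw [h1, hcc] at heq ⊢; rw [h2] at heq; linarith
      · exact absurd (h1.trans h2.symm) (fun hh => hcontra hh)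
    · -- distinct endpoints
      have hσ : e0 ⟨0, hm⟩ * T k = 1 ∨ e0 ⟨0, hm⟩ * T k = -1 := by
        rcases hεv with h1 | h1 <;> rcases hT1 k with h2 | h2 <;> rw [h1, h2] <;> norm_num
      have hτ : -(e0 ⟨0, hm⟩ * T j) = 1 ∨ -(e0 ⟨0, hm⟩ * T j) = -1 := by
        rcases hεv with h1 | h1 <;> rcases hT1 j with h2 | h2 <;> rw [h1, h2] <;> norm_num
      set D : Fin n → ℝ := fun l => (e0 ⟨0, hm⟩ * T k) * ee n (c ⟨k, by omega⟩) l +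
          (-(e0 ⟨0, hm⟩ * T j)) * ee n (c ⟨j, by omega⟩) l with hDdef
      have hDP : D ∈ P := by
        apply hP.2.2 _ (pm_mem_Bn hcc hσ hτ)
        show D ∈ PLC P
        rw [← hFsum]
        exact sum_mem_PLC _ _ (fun i _ => (hα i).1)
      have hanti := ha.2 _ _ hcc D hDP (pm_form _ _ hσ hτ)
      rcases hanti with hdot | hzero
      · exfalso
        apply hdot
        rw [hDdef, dot_pm]
        have hexp : (e0 ⟨0, hm⟩ * T k) * ((a (c ⟨k, by omega⟩) : ℝ)) +
            (-(e0 ⟨0, hm⟩ * T j)) * ((a (c ⟨j, by omega⟩) : ℝ)) =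
            e0 ⟨0, hm⟩ * (T k * (a (c ⟨k, by omega⟩) : ℝ)) -
            e0 ⟨0, hm⟩ * (T j * (a (c ⟨j, by omega⟩) : ℝ)) := by ring
        rw [hexp, heq]
        ring
      · rw [hzero.1]
        norm_num
  -- assemble
  have hv : ∀ k : Fin (m + 1), T (k : ℕ) * (a (c k) : ℝ) = -1 ∨
      T (k : ℕ) * (a (c k) : ℝ) = 0 ∨ T (k : ℕ) * (a (c k) : ℝ) = 1 := by
    intro k
    rcases hT1 (k : ℕ) with h1 | h1 <;> rcases ha.1 (c k) with h2 | h2 | h2 <;>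
      rw [h1, h2] <;> norm_num
  have hp : ∀ k j : Fin (m + 1), k ≠ j →
      T (k : ℕ) * (a (c k) : ℝ) = T (j : ℕ) * (a (c j) : ℝ) →
      T (k : ℕ) * (a (c k) : ℝ) = 0 := by
    intro k j hne heq
    rcases Nat.lt_or_ge (k : ℕ) (j : ℕ) with hlt | hge
    · exact key (k : ℕ) (j : ℕ) hlt (by omega) heq
    · have hlt' : (j : ℕ) < (k : ℕ) := by
        rcases Nat.lt_or_ge (j : ℕ) (k : ℕ) with h | h
        · exact h
        · exact absurd (Fin.ext (by omega)) hne
      rw [heq]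
      exact key (j : ℕ) (k : ℕ) hlt' (by omega) heq.symm
  have hfin := sum_bound (fun k : Fin (m + 1) => T (k : ℕ) * (a (c k) : ℝ)) hv hp
  have hceq : chainFun c s (fun i => (a i : ℝ)) =
      ∑ k : Fin (m + 1), T (k : ℕ) * (a (c k) : ℝ) := rfl
  rw [hceq]
  exact hfin
end Main
/-- the integer points of the signed chain polytope `C_P` are exactly
the antichains of `P`. -/
theorem stmt18 {n : ℕ} (P : Set (Fin n → ℝ)) (hP : IsSignedPoset P) :
    ∀ a : Fin n → ℤ,
      ((fun i => (a i : ℝ)) ∈ chainPolytope P) ↔ IsSAntichain P a := by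
  intro a
  constructor
  · intro hx
    have hvals : ∀ i, a i = -1 ∨ a i = 0 ∨ a i = 1 := by
      intro i
      have hch : IsSChain P 0 (fun _ => i) (fun k => k.elim0) :=
        ⟨fun k => k.elim0, fun k => k.elim0, fun k => k.elim0, fun k h => k.elim0⟩
      have hb := hx 0 (fun _ => i) (fun k => k.elim0) hch
      rw [chainFun_zero] at hb
      have h1 : (-1 : ℤ) ≤ a i := by exact_mod_cast hb.1
      have h2 : a i ≤ (1 : ℤ) := by exact_mod_cast hb.2
      omega
    refine ⟨hvals, ?_⟩
    intro i j hij αp hαpP hform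
    by_contra hcon
    push_neg at hcon
    obtain ⟨hdot0, hnz⟩ := hcon
    set c2 : Fin 2 → Fin n := fun k => if (k : ℕ) = 0 then i else j with hc2
    have hc0 : c2 ((0 : Fin 1).castSucc) = i := by simp [hc2]
    have hc1 : c2 ((0 : Fin 1).succ) = j := by simp [hc2]
    have hai : a i ≠ 0 ∨ a j ≠ 0 := by
      by_contra hcc
      push_neg at hcc
      exact hnz hcc.1 hcc.2
    rcases hform with h | h | h | h
    · -- αp = ee i + ee j : use s = -1
      have hdot : (a i : ℝ) + (a j : ℝ) = 0 := by
        have : αp = fun l => (1 : ℝ) * ee n i l + (1 : ℝ) * ee n j l := by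
          rw [h]; funext l; simp [Pi.add_apply]
        rw [this, dot_pm] at hdot0
        linarith [hdot0]
      have hch : IsSChain P 1 c2 (fun _ => (-1 : ℝ)) := by
        refine ⟨fun k => Or.inr rfl, fun k => αp, fun k => ⟨hαpP, Or.inr ⟨rfl, ?_⟩⟩,
          fun k hk => absurd hk (by omega)⟩
        have hk0 : k = 0 := Subsingleton.elim k 0
        rw [hk0, hc0, hc1]
        exact Or.inl h
      have hb := hx 1 c2 (fun _ => (-1 : ℝ)) hch
      rw [chainFun_one] at hb
      have hc0' : c2 (0 : Fin 2) = i := by simp [hc2]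
      have hc1' : c2 (1 : Fin 2) = j := by simp [hc2]
      rw [hc0', hc1'] at hb
      have hzi : (a j : ℝ) = -(a i) := by linarith
      have hzi' : a j = -(a i) := by exact_mod_cast hzi
      have hb1 : (-1 : ℝ) ≤ (a i : ℝ) - (a j : ℝ) := by linarith [hb.1]
      have hb2 : (a i : ℝ) - (a j : ℝ) ≤ 1 := by linarith [hb.2]
      have hb1' : (-1 : ℤ) ≤ a i - a j := by exact_mod_cast hb1
      have hb2' : a i - a j ≤ (1 : ℤ) := by exact_mod_cast hb2
      rcases hvals i with h' | h' | h' <;> rcases hai with h'' | h'' <;> omega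
    · -- αp = -ee i - ee j : use s = -1
      have hdot : (a i : ℝ) + (a j : ℝ) = 0 := by
        have : αp = fun l => (-1 : ℝ) * ee n i l + (-1 : ℝ) * ee n j l := by
          rw [h]; funext l; simp [Pi.sub_apply, Pi.neg_apply]; ring
        rw [this, dot_pm] at hdot0
        linarith [hdot0]
      have hch : IsSChain P 1 c2 (fun _ => (-1 : ℝ)) := by
        refine ⟨fun k => Or.inr rfl, fun k => αp, fun k => ⟨hαpP, Or.inr ⟨rfl, ?_⟩⟩,
          fun k hk => absurd hk (by omega)⟩
        have hk0 : k = 0 := Subsingleton.elim k 0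
        rw [hk0, hc0, hc1]
        refine Or.inr ?_
        rw [h]; funext l; simp [Pi.add_apply, Pi.sub_apply, Pi.neg_apply]; ring
      have hb := hx 1 c2 (fun _ => (-1 : ℝ)) hch
      rw [chainFun_one] at hb
      have hc0' : c2 (0 : Fin 2) = i := by simp [hc2]
      have hc1' : c2 (1 : Fin 2) = j := by simp [hc2]
      rw [hc0', hc1'] at hb
      have hb1 : (-1 : ℝ) ≤ (a i : ℝ) - (a j : ℝ) := by linarith [hb.1]
      have hb2 : (a i : ℝ) - (a j : ℝ) ≤ 1 := by linarith [hb.2]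
      have hb1' : (-1 : ℤ) ≤ a i - a j := by exact_mod_cast hb1
      have hb2' : a i - a j ≤ (1 : ℤ) := by exact_mod_cast hb2
      have hzi : a j = -(a i) := by
        have : (a j : ℝ) = -(a i) := by linarith
        exact_mod_cast this
      rcases hvals i with h' | h' | h' <;> rcases hai with h'' | h'' <;> omega
    · -- αp = ee i - ee j : use s = 1
      have hdot : (a i : ℝ) - (a j : ℝ) = 0 := by
        have : αp = fun l => (1 : ℝ) * ee n i l + (-1 : ℝ) * ee n j l := by
          rw [h]; funext l; simp [Pi.sub_apply]; ring
        rw [this, dot_pm] at hdot0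
        linarith [hdot0]
      have hch : IsSChain P 1 c2 (fun _ => (1 : ℝ)) := by
        refine ⟨fun k => Or.inl rfl, fun k => αp, fun k => ⟨hαpP, Or.inl ⟨rfl, ?_⟩⟩,
          fun k hk => absurd hk (by omega)⟩
        have hk0 : k = 0 := Subsingleton.elim k 0
        rw [hk0, hc0, hc1]
        exact Or.inl h
      have hb := hx 1 c2 (fun _ => (1 : ℝ)) hch
      rw [chainFun_one] at hb
      have hc0' : c2 (0 : Fin 2) = i := by simp [hc2]
      have hc1' : c2 (1 : Fin 2) = j := by simp [hc2]
      rw [hc0', hc1'] at hb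
      have hb1 : (-1 : ℝ) ≤ (a i : ℝ) + (a j : ℝ) := by linarith [hb.1]
      have hb2 : (a i : ℝ) + (a j : ℝ) ≤ 1 := by linarith [hb.2]
      have hb1' : (-1 : ℤ) ≤ a i + a j := by exact_mod_cast hb1
      have hb2' : a i + a j ≤ (1 : ℤ) := by exact_mod_cast hb2
      have hzi : a j = a i := by
        have : (a j : ℝ) = (a i : ℝ) := by linarith
        exact_mod_cast this
      rcases hvals i with h' | h' | h' <;> rcases hai with h'' | h'' <;> omega
    · -- αp = -ee i + ee j : use s = 1
      have hdot : (a i : ℝ) - (a j : ℝ) = 0 := by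
        have : αp = fun l => (-1 : ℝ) * ee n i l + (1 : ℝ) * ee n j l := by
          rw [h]; funext l; simp [Pi.add_apply, Pi.neg_apply]
        rw [this, dot_pm] at hdot0
        linarith [hdot0]
      have hch : IsSChain P 1 c2 (fun _ => (1 : ℝ)) := by
        refine ⟨fun k => Or.inl rfl, fun k => αp, fun k => ⟨hαpP, Or.inl ⟨rfl, ?_⟩⟩,
          fun k hk => absurd hk (by omega)⟩
        have hk0 : k = 0 := Subsingleton.elim k 0
        rw [hk0, hc0, hc1]
        refine Or.inr ?_
        rw [h]; funext l; simp [Pi.add_apply, Pi.sub_apply, Pi.neg_apply]; ring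
      have hb := hx 1 c2 (fun _ => (1 : ℝ)) hch
      rw [chainFun_one] at hb
      have hc0' : c2 (0 : Fin 2) = i := by simp [hc2]
      have hc1' : c2 (1 : Fin 2) = j := by simp [hc2]
      rw [hc0', hc1'] at hb
      have hb1 : (-1 : ℝ) ≤ (a i : ℝ) + (a j : ℝ) := by linarith [hb.1]
      have hb2 : (a i : ℝ) + (a j : ℝ) ≤ 1 := by linarith [hb.2]
      have hb1' : (-1 : ℤ) ≤ a i + a j := by exact_mod_cast hb1
      have hb2' : a i + a j ≤ (1 : ℤ) := by exact_mod_cast hb2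
      have hzi : a j = a i := by
        have : (a j : ℝ) = (a i : ℝ) := by linarith
        exact_mod_cast this
      rcases hvals i with h' | h' | h' <;> rcases hai with h'' | h'' <;> omega
  · intro ha m c s hch
    exact antichain_chain_bound hP ha m c s hch
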